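/- Fix all parameters except γ, and assume the coexistence equilibrium exists (β > h·(γ+δ) and (K₀+F)·(β − h·(γ+δ)) > γ+δ). Then the crop equilibrium value x*(γ) = (γ+δ)/(β − h·(γ+δ)) is a strictly increasing function of γ, i.e., increasing insecticide-induced pest mortality strictly increases the equilibrium crop density. -/
import Mathlib


noncomputable def xstar (β δ h γ : ℝ) : ℝ := (γ + δ) / (β - h * (γ + δ))

theorem crop_equilibrium_increasing_in_gamma
    (r K0 F α β δ h : ℝ)
    (hr : 0 < r) (hK0 : 0 < K0) (hF : 0 < F) (hα : 0 < α)
    (hβ : 0 < β) (hδ : 0 < δ) (hh : 0 < h) :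
    ∀ γ₁ γ₂ : ℝ, 0 < γ₁ → 0 < γ₂ →
      β > h * (γ₁ + δ) → β > h * (γ₂ + δ) →
      (K0 + F) * (β - h * (γ₁ + δ)) > γ₁ + δ →
      (K0 + F) * (β - h * (γ₂ + δ)) > γ₂ + δ →
      γ₁ < γ₂ →
      xstar β δ h γ₁ < xstar β δ h γ₂ := by
  intro γ₁ γ₂ h1 h2 hb1 hb2 _ _ hlt
  have d1 : 0 < β - h * (γ₁ + δ) := by linarith
  have d2 : 0 < β - h * (γ₂ + δ) := by linarith
  unfold xstar
  rw [div_lt_div_iff₀ d1 d2]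
  nlinarith [mul_pos h1 hδ]
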